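/- If S is a family of pairwise edge-disjoint and internally vertex-disjoint full components, then the loss of the union graph equals the union of the losses of the components: L(∪S) = ∪_{K∈S} L(K), and hence l(∪S) = Σ_{K∈S} l(K). -/
import Mathlib


open scoped Classical

noncomputable section

/-- A full component on terminal set `R`. -/
structure FullComp {V : Type*} [Fintype V] (G : SimpleGraph V) (R : Set V) where
  sub : G.Subgraph
  tree : sub.coe.IsTree
  leaf_iff : ∀ v ∈ sub.verts, v ∈ R ↔ sub.degree v = 1

/-- `F` is a candidate loss ("connector") for the subgraph `H`: a subset of the edges of
`H` such that every vertex of `H` is connected by `F`-edges to some terminal. -/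
def IsConnector {V : Type*} {G : SimpleGraph V} (R : Set V) (H : G.Subgraph)
    (F : Set (Sym2 V)) : Prop :=
  F ⊆ H.edgeSet ∧ ∀ v ∈ H.verts, ∃ t ∈ R, (SimpleGraph.fromEdgeSet F).Reachable v t

/-- Walking from a vertex of `S` towards a terminal, the prefix of the walk until the
first terminal stays within `H`. -/
lemma walk_to_terminal {V : Type*} {G H : SimpleGraph V} {R S : Set V}
    (hloc : ∀ a b, G.Adj a b → a ∈ S → a ∉ R → H.Adj a b ∧ b ∈ S) :
    ∀ {v t : V}, G.Walk v t → v ∈ S → t ∈ R → ∃ t' ∈ R, H.Reachable v t' := by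
  intro v t p
  induction p with
  | nil => intro _ ht; exact ⟨_, ht, .refl _⟩
  | @cons u v' w h p ih =>
    intro hu ht
    by_cases huR : u ∈ R
    · exact ⟨u, huR, .refl u⟩
    · obtain ⟨hH, hvS⟩ := hloc u v' h hu huR
      obtain ⟨t', ht', hr⟩ := ih hvS ht
      exact ⟨t', ht', hH.reachable.trans hr⟩

/-- Monotonicity of `finsum` over finite sets for nonnegative weights. -/
lemma csum_mono {α : Type*} [Fintype α] (c : α → ℝ) (hc : ∀ e, 0 ≤ c e)
    {s t : Set α} (h : s ⊆ t) : (∑ᶠ e ∈ s, c e) ≤ ∑ᶠ e ∈ t, c e := by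
  have hs := s.toFinite
  have ht := t.toFinite
  rw [← hs.coe_toFinset, ← ht.coe_toFinset, finsum_mem_coe_finset, finsum_mem_coe_finset]
  refine Finset.sum_le_sum_of_subset_of_nonneg ?_ fun i _ _ => hc i
  intro x hx
  rw [Set.Finite.mem_toFinset] at hx ⊢
  exact h hx

/-- If `𝒮` is a family of pairwise edge-disjoint and internally
vertex-disjoint full components, then the loss of the union graph is the union of the
losses of the components, and hence `l(∪𝒮) = ∑_{K ∈ 𝒮} l(K)`. -/
theorem stmt5 {V : Type*} [Fintype V] (G : SimpleGraph V) (R : Finset V)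
    (c : Sym2 V → ℝ) (hc : ∀ e, 0 ≤ c e)
    (𝒮 : Finset (FullComp G (R : Set V)))
    (hdisjE : ∀ K ∈ 𝒮, ∀ K' ∈ 𝒮, K ≠ K' → Disjoint K.sub.edgeSet K'.sub.edgeSet)
    (hdisjV : ∀ K ∈ 𝒮, ∀ K' ∈ 𝒮, K ≠ K' →
      K.sub.verts ∩ K'.sub.verts ⊆ (R : Set V))
    (F : FullComp G (R : Set V) → Set (Sym2 V))
    (hF : ∀ K ∈ 𝒮, IsConnector (R : Set V) K.sub (F K) ∧
      ∀ F', IsConnector (R : Set V) K.sub F' →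
        (∑ᶠ e ∈ F K, c e) ≤ ∑ᶠ e ∈ F', c e) :
    (IsConnector (R : Set V) (⨆ K ∈ 𝒮, K.sub) (⋃ K ∈ 𝒮, F K) ∧
      ∀ F', IsConnector (R : Set V) (⨆ K ∈ 𝒮, K.sub) F' →
        (∑ᶠ e ∈ ⋃ K ∈ 𝒮, F K, c e) ≤ ∑ᶠ e ∈ F', c e) ∧
    (∑ᶠ e ∈ ⋃ K ∈ 𝒮, F K, c e) = ∑ K ∈ 𝒮, ∑ᶠ e ∈ F K, c e := by
  classical
  -- basic facts about the sup subgraph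
  have hle : ∀ K ∈ 𝒮, K.sub ≤ ⨆ K ∈ 𝒮, K.sub := fun K hK =>
    le_iSup₂ (f := fun (K : FullComp G (R : Set V)) (_ : K ∈ 𝒮) => K.sub) K hK
  have hsupAdj : ∀ a b : V, (⨆ K ∈ 𝒮, K.sub).Adj a b ↔ ∃ K ∈ 𝒮, K.sub.Adj a b := by
    intro a b
    simp [SimpleGraph.Subgraph.iSup_adj]
  have hsupVerts : (⨆ K ∈ 𝒮, K.sub).verts = ⋃ K ∈ 𝒮, K.sub.verts := by
    simp [SimpleGraph.Subgraph.verts_iSup]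
  -- the union of the `F K` is a connector
  have hConn : IsConnector (R : Set V) (⨆ K ∈ 𝒮, K.sub) (⋃ K ∈ 𝒮, F K) := by
    constructor
    · intro e he
      rw [Set.mem_iUnion₂] at he
      obtain ⟨K, hK, heK⟩ := he
      exact SimpleGraph.Subgraph.edgeSet_mono (hle K hK) ((hF K hK).1.1 heK)
    · intro v hv
      rw [hsupVerts, Set.mem_iUnion₂] at hv
      obtain ⟨K, hK, hvK⟩ := hv
      obtain ⟨t, ht, hr⟩ := (hF K hK).1.2 v hvK
      refine ⟨t, ht, hr.mono (SimpleGraph.fromEdgeSet_mono ?_)⟩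
      exact Set.subset_iUnion₂ (s := fun K _ => F K) K hK
  -- if `F'` is a connector for the sup, then `F' ∩ K.sub.edgeSet` is a connector for `K`
  have hRestrict : ∀ F', IsConnector (R : Set V) (⨆ K ∈ 𝒮, K.sub) F' →
      ∀ K ∈ 𝒮, IsConnector (R : Set V) K.sub (F' ∩ K.sub.edgeSet) := by
    intro F' hF' K hK
    refine ⟨Set.inter_subset_right, ?_⟩
    intro v hv
    have hvsup : v ∈ (⨆ K ∈ 𝒮, K.sub).verts := by
      rw [hsupVerts]; exact Set.mem_iUnion₂.2 ⟨K, hK, hv⟩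
    obtain ⟨t, ht, hr⟩ := hF'.2 v hvsup
    obtain ⟨p⟩ := hr
    refine walk_to_terminal (S := K.sub.verts)
      (H := SimpleGraph.fromEdgeSet (F' ∩ K.sub.edgeSet)) ?_ p hv ht
    intro a b hab haS haR
    rw [SimpleGraph.fromEdgeSet_adj] at hab
    obtain ⟨habF', hne⟩ := hab
    have : (⨆ K ∈ 𝒮, K.sub).Adj a b := hF'.1 habF'
    rw [hsupAdj] at this
    obtain ⟨K', hK', hadj⟩ := this
    have hKK' : K' = K := by
      by_contra hne'
      exact haR (hdisjV K hK K' hK' (Ne.symm hne') ⟨haS, hadj.fst_mem⟩)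
    subst hKK'
    refine ⟨(SimpleGraph.fromEdgeSet_adj _).2 ⟨⟨habF', ?_⟩, hne⟩, hadj.snd_mem⟩
    exact (SimpleGraph.Subgraph.mem_edgeSet).2 hadj
  -- sum over a pairwise-disjoint bUnion
  have hsum : ∀ (T : FullComp G (R : Set V) → Set (Sym2 V)),
      ((↑𝒮 : Set (FullComp G (R : Set V))).PairwiseDisjoint T) →
      (∑ᶠ e ∈ ⋃ K ∈ 𝒮, T K, c e) = ∑ K ∈ 𝒮, ∑ᶠ e ∈ T K, c e := by
    intro T hT
    have h1 : (⋃ K ∈ 𝒮, T K) = ⋃ K ∈ (↑𝒮 : Set (FullComp G (R : Set V))), T K := by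
      simp
    rw [h1, finsum_mem_biUnion hT 𝒮.finite_toSet (fun K _ => (T K).toFinite),
      finsum_mem_coe_finset]
  have hdisjF : (↑𝒮 : Set (FullComp G (R : Set V))).PairwiseDisjoint F := by
    intro K hK K' hK' hne
    exact (hdisjE K (Finset.mem_coe.1 hK) K' (Finset.mem_coe.1 hK') hne).mono
      (hF K (Finset.mem_coe.1 hK)).1.1 (hF K' (Finset.mem_coe.1 hK')).1.1
  have heq : (∑ᶠ e ∈ ⋃ K ∈ 𝒮, F K, c e) = ∑ K ∈ 𝒮, ∑ᶠ e ∈ F K, c e := hsum F hdisjF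
  refine ⟨⟨hConn, ?_⟩, heq⟩
  -- optimality
  intro F' hF'
  have hdisjF' : (↑𝒮 : Set (FullComp G (R : Set V))).PairwiseDisjoint
      (fun K => F' ∩ K.sub.edgeSet) := by
    intro K hK K' hK' hne
    exact (hdisjE K (Finset.mem_coe.1 hK) K' (Finset.mem_coe.1 hK') hne).mono
      Set.inter_subset_right Set.inter_subset_right
  calc (∑ᶠ e ∈ ⋃ K ∈ 𝒮, F K, c e) = ∑ K ∈ 𝒮, ∑ᶠ e ∈ F K, c e := heq
    _ ≤ ∑ K ∈ 𝒮, ∑ᶠ e ∈ F' ∩ K.sub.edgeSet, c e := by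
        refine Finset.sum_le_sum fun K hK => ?_
        exact (hF K hK).2 _ (hRestrict F' hF' K hK)
    _ = ∑ᶠ e ∈ ⋃ K ∈ 𝒮, F' ∩ K.sub.edgeSet, c e := (hsum _ hdisjF').symm
    _ ≤ ∑ᶠ e ∈ F', c e := by
        refine csum_mono c hc ?_
        exact Set.iUnion₂_subset fun K _ => Set.inter_subset_left
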